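/- Let ℓ and n be natural numbers with 2 < ℓ ≤ n and let w₁, …, wₙ be nonnegative reals. Consider n papers where paper i has ℓ weight entries: one entry of value wᵢ and ℓ − 1 entries of value 0. For every partition of the n·ℓ weight entries' values into n multisets S₁, …, Sₙ each of cardinality ℓ (i.e., the multiset sum S₁ + ⋯ + Sₙ equals the multiset consisting of w₁, …, wₙ together with n(ℓ−1) zeros), there exists a function assigning each weight entry (i, s) with i ∈ [n], s ∈ [ℓ] to a reviewer in [n] such that each reviewer receives exactly ℓ entries, no reviewer receives two entries from the same paper, and for every reviewer j the multiset of values of the entries assigned to j equals Sⱼ. -/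

import Mathlib

open Finset

lemma sdr {k : ℕ} (B : Fin k → Finset ℕ) (hB : ∀ t, k ≤ (B t).card) :
    ∃ c : Fin k → ℕ, Function.Injective c ∧ ∀ t, c t ∈ B t := by
  rw [← Finset.all_card_le_biUnion_card_iff_exists_injective]
  intro s
  rcases s.eq_empty_or_nonempty with rfl | ⟨t, ht⟩
  · simp
  · calc s.card ≤ k := by simpa using Finset.card_le_univ s
    _ ≤ (B t).card := hB t
    _ ≤ (s.biUnion B).card := Finset.card_le_card (fun x hx => Finset.mem_biUnion.2 ⟨t, ht, hx⟩)

lemma exists_inj_fin (k : ℕ) (s : Finset ℕ) (h : k ≤ s.card) :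
    ∃ q : Fin k → ℕ, Function.Injective q ∧ ∀ t, q t ∈ s := by
  obtain ⟨s', hs', hcard⟩ := Finset.exists_subset_card_eq h
  refine ⟨fun t => s'.orderIsoOfFin hcard t, ?_, fun t => hs' (s'.orderIsoOfFin hcard t).2⟩
  intro a b hab
  have := (s'.orderIsoOfFin hcard).injective (Subtype.ext hab)
  exact this

section Reconstruct
variable {k : ℕ} (g : ℕ → ℕ) (P' R' : Finset ℕ) (T' : ℕ → Finset ℕ) (p r : ℕ)
  (q jv : Fin k → ℕ)

/-- Extend a solution on `(P', R')` to one on `(insert p P', insert r R')` using a system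
of `k` swaps, where `ℓ = k + 1`. -/
lemma reconstruct
    (hp : p ∉ P') (hr : r ∉ R')
    (hg' : ∀ i ∈ P', g i ∈ R')
    (hT'sub : ∀ j ∈ R', T' j ⊆ P')
    (hT'card : ∀ j ∈ R', (T' j).card = k + 1)
    (hT'fib : ∀ i ∈ P', i ∈ T' (g i))
    (hcov : ∀ i ∈ P', (R'.filter (fun j => i ∈ T' j)).card = k + 1)
    (hqinj : Function.Injective q) (hjinj : Function.Injective jv)
    (hqP : ∀ t, q t ∈ P') (hjR : ∀ t, jv t ∈ R')
    (hqT : ∀ t, q t ∈ T' (jv t)) (hgq : ∀ t, g (q t) ≠ jv t)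
    (hgp : g p = r ∨ ∃ t, jv t = g p) :
    ∃ T : ℕ → Finset ℕ,
      (∀ j ∈ insert r R', T j ⊆ insert p P' ∧ (T j).card = k + 1) ∧
      (∀ i ∈ insert p P', i ∈ T (g i)) ∧
      (∀ i ∈ insert p P', ((insert r R').filter (fun j => i ∈ T j)).card = k + 1) := by
  classical
  set T : ℕ → Finset ℕ := fun j =>
    if j = r then insert p (Finset.image q Finset.univ)
    else if h : ∃ t, jv t = j then insert p ((T' j).erase (q (Classical.choose h)))
    else T' j with hT
  have hTr : T r = insert p (Finset.image q Finset.univ) := by simp [hT]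
  have hTj : ∀ t, T (jv t) = insert p ((T' (jv t)).erase (q t)) := by
    intro t
    have h1 : jv t ≠ r := fun h => hr (h ▸ hjR t)
    have h2 : ∃ t', jv t' = jv t := ⟨t, rfl⟩
    have h3 : Classical.choose h2 = t := hjinj (Classical.choose_spec h2)
    simp [hT, h1, h2, h3]
  have hTo : ∀ j, j ≠ r → (∀ t, jv t ≠ j) → T j = T' j := by
    intro j h1 h2
    have : ¬ ∃ t, jv t = j := fun ⟨t, ht⟩ => h2 t ht
    simp [hT, h1, this]
  have hqne_p : ∀ t, q t ≠ p := fun t h => hp (h ▸ hqP t)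
  have hpImg : p ∉ Finset.image q Finset.univ := by
    simp only [Finset.mem_image]
    rintro ⟨t, -, h⟩; exact hqne_p t h
  -- membership characterization for j ∈ R'
  have hmem : ∀ j ∈ R', ∀ i ∈ P', (i ∈ T j ↔ (i ∈ T' j ∧ ∀ t, jv t = j → i ≠ q t)) := by
    intro j hj i hi
    have hjr : j ≠ r := fun h => hr (h ▸ hj)
    by_cases h : ∃ t, jv t = j
    · obtain ⟨t, ht⟩ := h
      rw [← ht, hTj t]
      have hip : i ≠ p := fun h => hp (h ▸ hi)
      constructor
      · intro hmem
        rcases Finset.mem_insert.1 hmem with h' | h'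
        · exact absurd h' hip
        · exact ⟨Finset.mem_of_mem_erase h', by
            intro t' ht'
            have : t' = t := hjinj (by rw [ht', ht])
            subst this
            exact Finset.ne_of_mem_erase h'⟩
      · rintro ⟨h1, h2⟩
        exact Finset.mem_insert_of_mem (Finset.mem_erase.2 ⟨h2 t rfl, h1⟩)
    · rw [hTo j hjr (fun t htv => h ⟨t, htv⟩)]
      exact ⟨fun h1 => ⟨h1, fun t htv => absurd ⟨t, htv⟩ h⟩, fun h1 => h1.1⟩
  have hpT : ∀ j ∈ R', (p ∈ T j ↔ ∃ t, jv t = j) := by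
    intro j hj
    have hjr : j ≠ r := fun h => hr (h ▸ hj)
    by_cases h : ∃ t, jv t = j
    · obtain ⟨t, ht⟩ := h
      rw [← ht, hTj t]
      exact ⟨fun _ => ⟨t, rfl⟩, fun _ => Finset.mem_insert_self _ _⟩
    · rw [hTo j hjr (fun t htv => h ⟨t, htv⟩)]
      constructor
      · intro hmem; exact absurd (hT'sub j hj hmem) hp
      · intro h'; exact absurd h' h
  refine ⟨T, ?_, ?_, ?_⟩
  · -- sizes and subsets
    intro j hj
    rcases Finset.mem_insert.1 hj with rfl | hj'
    · constructor
      · rw [hTr]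
        intro x hx
        rcases Finset.mem_insert.1 hx with rfl | hx'
        · exact Finset.mem_insert_self _ _
        · obtain ⟨t, -, ht⟩ := Finset.mem_image.1 hx'
          exact Finset.mem_insert_of_mem (ht ▸ hqP t)
      · rw [hTr, Finset.card_insert_of_notMem hpImg,
          Finset.card_image_of_injective _ hqinj, Finset.card_univ, Fintype.card_fin]
    · by_cases h : ∃ t, jv t = j
      · obtain ⟨t, ht⟩ := h
        subst ht
        rw [hTj t]
        have hqmem : q t ∈ T' (jv t) := hqT t
        have hpe : p ∉ (T' (jv t)).erase (q t) := fun h =>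
          hp (hT'sub _ hj' (Finset.mem_of_mem_erase h))
        constructor
        · intro x hx
          rcases Finset.mem_insert.1 hx with rfl | hx'
          · exact Finset.mem_insert_self _ _
          · exact Finset.mem_insert_of_mem (hT'sub _ hj' (Finset.mem_of_mem_erase hx'))
        · rw [Finset.card_insert_of_notMem hpe, Finset.card_erase_of_mem hqmem,
            hT'card _ hj']
          omega
      · have hjr : j ≠ r := fun h' => hr (h' ▸ hj')
        rw [hTo j hjr (fun t htv => h ⟨t, htv⟩)]
        exact ⟨fun x hx => Finset.mem_insert_of_mem (hT'sub _ hj' hx),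
          hT'card _ hj'⟩
  · -- fiber membership
    intro i hi
    rcases Finset.mem_insert.1 hi with rfl | hi'
    · by_cases h : g i = r
      · rw [h, hTr]; exact Finset.mem_insert_self _ _
      · obtain ⟨t, ht⟩ := hgp.resolve_left h
        rw [← ht, hTj t]
        exact Finset.mem_insert_self _ _
    · have hgi : g i ∈ R' := hg' i hi'
      rw [hmem (g i) hgi i hi']
      refine ⟨hT'fib i hi', fun t htv hiq => ?_⟩
      exact hgq t (by rw [← hiq]; exact htv.symm)
  · -- coverage counts
    intro i hi
    rcases Finset.mem_insert.1 hi with hip | hi'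
    · -- i = p
      rw [hip]
      have : (insert r R').filter (fun j => p ∈ T j) = insert r (Finset.image jv Finset.univ) := by
        ext j
        simp only [Finset.mem_filter, Finset.mem_insert, Finset.mem_image]
        constructor
        · rintro ⟨hj, hmemj⟩
          rcases hj with rfl | hj'
          · exact Or.inl rfl
          · exact Or.inr (by
              obtain ⟨t, ht⟩ := (hpT j hj').1 hmemj
              exact ⟨t, Finset.mem_univ t, ht⟩)
        · rintro (rfl | ⟨t, -, ht⟩)
          · exact ⟨Or.inl rfl, by rw [hTr]; exact Finset.mem_insert_self _ _⟩
          · exact ⟨Or.inr (ht ▸ hjR t), (hpT j (ht ▸ hjR t)).2 ⟨t, ht⟩⟩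
      rw [this]
      have hrImg : r ∉ Finset.image jv Finset.univ := by
        simp only [Finset.mem_image]
        rintro ⟨t, -, ht⟩; exact hr (ht ▸ hjR t)
      rw [Finset.card_insert_of_notMem hrImg, Finset.card_image_of_injective _ hjinj,
        Finset.card_univ, Fintype.card_fin]
    · by_cases hiq : ∃ t, q t = i
      · obtain ⟨t, rfl⟩ := hiq
        have h1 : (insert r R').filter (fun j => q t ∈ T j)
            = insert r ((R'.filter (fun j => q t ∈ T' j)).erase (jv t)) := by
          ext j
          simp only [Finset.mem_filter, Finset.mem_insert, Finset.mem_erase]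
          constructor
          · rintro ⟨hj, hmemj⟩
            rcases hj with rfl | hj'
            · exact Or.inl rfl
            · refine Or.inr ⟨?_, hj', ?_⟩
              · intro hje
                subst hje
                have := (hmem _ hj' _ hi').1 hmemj
                exact this.2 t rfl rfl
              · exact ((hmem _ hj' _ hi').1 hmemj).1
          · rintro (rfl | ⟨hne, hj', hmemj⟩)
            · refine ⟨Or.inl rfl, ?_⟩
              rw [hTr]
              exact Finset.mem_insert_of_mem (Finset.mem_image.2 ⟨t, Finset.mem_univ t, rfl⟩)
            · refine ⟨Or.inr hj', (hmem _ hj' _ hi').2 ⟨hmemj, ?_⟩⟩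
              intro t' ht' hq'
              cases hqinj hq'
              exact hne ht'.symm
        rw [h1]
        have hjmem : jv t ∈ R'.filter (fun j => q t ∈ T' j) :=
          Finset.mem_filter.2 ⟨hjR t, hqT t⟩
        have hrne : r ∉ (R'.filter (fun j => q t ∈ T' j)).erase (jv t) := by
          intro h
          exact hr (Finset.mem_filter.1 (Finset.mem_of_mem_erase h)).1
        rw [Finset.card_insert_of_notMem hrne, Finset.card_erase_of_mem hjmem,
          hcov _ hi']
        omega
      · -- i untouched
        have h1 : (insert r R').filter (fun j => i ∈ T j) = R'.filter (fun j => i ∈ T' j) := by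
          ext j
          simp only [Finset.mem_filter, Finset.mem_insert]
          constructor
          · rintro ⟨hj, hmemj⟩
            rcases hj with rfl | hj'
            · exfalso
              rw [hTr] at hmemj
              rcases Finset.mem_insert.1 hmemj with rfl | hx
              · exact hp hi'
              · obtain ⟨t, -, ht⟩ := Finset.mem_image.1 hx
                exact hiq ⟨t, ht⟩
            · exact ⟨hj', ((hmem _ hj' _ hi').1 hmemj).1⟩
          · rintro ⟨hj', hmemj⟩
            refine ⟨Or.inr hj', (hmem _ hj' _ hi').2 ⟨hmemj, ?_⟩⟩
            intro t _ hq'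
            exact hiq ⟨t, hq'.symm⟩
        rw [h1, hcov _ hi']
end Reconstruct

/-- Core combinatorial lemma: an `ℓ`-regular bipartite graph containing a prescribed
function graph with fibers of size at most `ℓ`. -/
lemma core (ℓ : ℕ) (hl : 2 ≤ ℓ) :
    ∀ N, ℓ ≤ N → ∀ (P R : Finset ℕ) (g : ℕ → ℕ),
      P.card = N → R.card = N →
      (∀ i ∈ P, g i ∈ R) →
      (∀ j ∈ R, (P.filter (fun i => g i = j)).card ≤ ℓ) →
      ∃ T : ℕ → Finset ℕ,
        (∀ j ∈ R, T j ⊆ P ∧ (T j).card = ℓ) ∧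
        (∀ i ∈ P, i ∈ T (g i)) ∧
        (∀ i ∈ P, (R.filter (fun j => i ∈ T j)).card = ℓ) := by
  classical
  intro N hN
  induction N, hN using Nat.le_induction with
  | base =>
    intro P R g hP hR hg hfib
    refine ⟨fun _ => P, fun j hj => ⟨Finset.Subset.refl P, hP⟩, fun i hi => hi, fun i hi => ?_⟩
    rw [Finset.filter_true_of_mem (fun j _ => hi), hR]
  | succ m hm IH =>
    intro P R g hP hR hg hfib
    obtain ⟨k, rfl⟩ : ∃ k, ℓ = k + 1 := ⟨ℓ - 1, by omega⟩
    by_cases hcase : ∃ r ∈ R, P.filter (fun i => g i = r) = ∅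
    · -- Case A: some reviewer has an empty fiber
      obtain ⟨r, hrR, hremp⟩ := hcase
      obtain ⟨p, hpP⟩ := Finset.card_pos.1 (by omega : 0 < P.card)
      set P' := P.erase p with hP'
      set R' := R.erase r with hR'
      have hPcard' : P'.card = m := by rw [hP', Finset.card_erase_of_mem hpP, hP]; omega
      have hRcard' : R'.card = m := by rw [hR', Finset.card_erase_of_mem hrR, hR]; omega
      have hgnr : ∀ i ∈ P, g i ≠ r := by
        intro i hi hgi
        have : i ∈ P.filter (fun i => g i = r) := Finset.mem_filter.2 ⟨hi, hgi⟩
        rw [hremp] at this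
        exact absurd this (Finset.notMem_empty i)
      have hg' : ∀ i ∈ P', g i ∈ R' := fun i hi =>
        Finset.mem_erase.2 ⟨hgnr i (Finset.mem_of_mem_erase hi), hg i (Finset.mem_of_mem_erase hi)⟩
      have hfib' : ∀ j ∈ R', (P'.filter (fun i => g i = j)).card ≤ k + 1 := by
        intro j hj
        calc (P'.filter (fun i => g i = j)).card
            ≤ (P.filter (fun i => g i = j)).card :=
              Finset.card_le_card (Finset.filter_subset_filter _ (Finset.erase_subset _ _))
          _ ≤ k + 1 := hfib j (Finset.mem_of_mem_erase hj)
      obtain ⟨T', hT'1, hT'2, hT'3⟩ := IH P' R' g hPcard' hRcard' hg' hfib'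
      -- g p ∈ R'
      have hgpR : g p ∈ R := hg p hpP
      have hgpR' : g p ∈ R' := Finset.mem_erase.2 ⟨hgnr p hpP, hgpR⟩
      -- choose q*
      have hfibP' : (P'.filter (fun i => g i = g p)).card ≤ k := by
        have h1 : (P.filter (fun i => g i = g p)).card ≤ k + 1 := hfib _ hgpR
        have h2 : P'.filter (fun i => g i = g p)
            = (P.filter (fun i => g i = g p)).erase p := by
          rw [hP', Finset.filter_erase]
        have hp2 : p ∈ P.filter (fun i => g i = g p) := Finset.mem_filter.2 ⟨hpP, rfl⟩
        rw [h2, Finset.card_erase_of_mem hp2]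
        omega
      have hqstar : ∃ qs ∈ T' (g p), g qs ≠ g p := by
        by_contra hcon
        push_neg at hcon
        have hsub : T' (g p) ⊆ P'.filter (fun i => g i = g p) := by
          intro x hx
          exact Finset.mem_filter.2 ⟨(hT'1 _ hgpR').1 hx, hcon x hx⟩
        have := Finset.card_le_card hsub
        rw [(hT'1 _ hgpR').2] at this
        omega
      obtain ⟨qs, hqsT, hqsg⟩ := hqstar
      have hqsP' : qs ∈ P' := (hT'1 _ hgpR').1 hqsT
      obtain ⟨k', rfl⟩ : ∃ k', k = k' + 1 := ⟨k - 1, by omega⟩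
      -- choose the other k' swap papers
      obtain ⟨q', hq'inj, hq'mem⟩ := exists_inj_fin k' (P'.erase qs) (by
        rw [Finset.card_erase_of_mem hqsP', hPcard']
        omega)
      -- choose their reviewers via SDR
      obtain ⟨jv', hjv'inj, hjv'mem⟩ := sdr
        (fun t => ((R'.filter (fun j => q' t ∈ T' j)).erase (g (q' t))).erase (g p)) (by
          intro t
          have h1 : (R'.filter (fun j => q' t ∈ T' j)).card = k' + 2 :=
            hT'3 _ (Finset.mem_of_mem_erase (hq'mem t))
          have h2 := Finset.pred_card_le_card_erase
            (s := R'.filter (fun j => q' t ∈ T' j)) (a := g (q' t))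
          have h3 := Finset.pred_card_le_card_erase
            (s := (R'.filter (fun j => q' t ∈ T' j)).erase (g (q' t))) (a := g p)
          show k' ≤ (((R'.filter (fun j => q' t ∈ T' j)).erase (g (q' t))).erase (g p)).card
          omega)
      set q : Fin (k' + 1) → ℕ := Fin.cases qs q' with hq
      set jv : Fin (k' + 1) → ℕ := Fin.cases (g p) jv' with hjv
      have hq0 : q 0 = qs := rfl
      have hjv0 : jv 0 = g p := rfl
      have hqsucc : ∀ t : Fin k', q t.succ = q' t := fun t => by simp [hq]
      have hjvsucc : ∀ t : Fin k', jv t.succ = jv' t := fun t => by simp [hjv]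
      have hq'P : ∀ t, q' t ∈ P' := fun t => Finset.mem_of_mem_erase (hq'mem t)
      have hjv'R : ∀ t, jv' t ∈ R' := fun t =>
        (Finset.mem_filter.1 (Finset.mem_of_mem_erase (Finset.mem_of_mem_erase (hjv'mem t)))).1
      have hjv'T : ∀ t, q' t ∈ T' (jv' t) := fun t =>
        (Finset.mem_filter.1 (Finset.mem_of_mem_erase (Finset.mem_of_mem_erase (hjv'mem t)))).2
      have hjv'ne : ∀ t, jv' t ≠ g (q' t) := fun t =>
        Finset.ne_of_mem_erase (Finset.mem_of_mem_erase (hjv'mem t))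
      have hjv'np : ∀ t, jv' t ≠ g p := fun t => Finset.ne_of_mem_erase (hjv'mem t)
      have hqinj : Function.Injective q := by
        intro a b hab
        induction a using Fin.cases with
        | zero => induction b using Fin.cases with
          | zero => rfl
          | succ b =>
            rw [hq0, hqsucc] at hab
            exact absurd hab.symm (Finset.ne_of_mem_erase (hq'mem b))
        | succ a => induction b using Fin.cases with
          | zero =>
            rw [hq0, hqsucc] at hab
            exact absurd hab (Finset.ne_of_mem_erase (hq'mem a))
          | succ b =>
            rw [hqsucc, hqsucc] at hab
            exact congrArg Fin.succ (hq'inj hab)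
      have hjinj : Function.Injective jv := by
        intro a b hab
        induction a using Fin.cases with
        | zero => induction b using Fin.cases with
          | zero => rfl
          | succ b =>
            rw [hjv0, hjvsucc] at hab
            exact absurd hab.symm (hjv'np b)
        | succ a => induction b using Fin.cases with
          | zero =>
            rw [hjv0, hjvsucc] at hab
            exact absurd hab (hjv'np a)
          | succ b =>
            rw [hjvsucc, hjvsucc] at hab
            exact congrArg Fin.succ (hjv'inj hab)
      have hqP : ∀ t, q t ∈ P' := by
        intro t
        induction t using Fin.cases with
        | zero => exact hqsP'
        | succ t => rw [hqsucc]; exact hq'P t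
      have hjR : ∀ t, jv t ∈ R' := by
        intro t
        induction t using Fin.cases with
        | zero => exact hgpR'
        | succ t => rw [hjvsucc]; exact hjv'R t
      have hqT : ∀ t, q t ∈ T' (jv t) := by
        intro t
        induction t using Fin.cases with
        | zero => exact hqsT
        | succ t => rw [hqsucc, hjvsucc]; exact hjv'T t
      have hgq : ∀ t, g (q t) ≠ jv t := by
        intro t
        induction t using Fin.cases with
        | zero => exact hqsg
        | succ t => rw [hqsucc, hjvsucc]; exact fun h => hjv'ne t h.symm
      obtain ⟨T, hT1, hT2, hT3⟩ := reconstruct g P' R' T' p r q jv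
        (Finset.notMem_erase p P) (Finset.notMem_erase r R) hg'
        (fun j hj => (hT'1 j hj).1) (fun j hj => (hT'1 j hj).2) hT'2 hT'3
        hqinj hjinj hqP hjR hqT hgq (Or.inr ⟨0, hjv0⟩)
      have hPeq : insert p P' = P := by rw [hP']; exact Finset.insert_erase hpP
      have hReq : insert r R' = R := by rw [hR']; exact Finset.insert_erase hrR
      rw [← hPeq, ← hReq]
      exact ⟨T, hT1, hT2, hT3⟩
    · -- Case B: all fibers nonempty, hence all of size 1
      push_neg at hcase
      have hone : ∀ j ∈ R, (P.filter (fun i => g i = j)).card = 1 := by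
        have hle : ∀ j ∈ R, 1 ≤ (P.filter (fun i => g i = j)).card := fun j hj =>
          Finset.card_pos.2 (hcase j hj)
        have hsum : ∑ j ∈ R, (P.filter (fun i => g i = j)).card = P.card :=
          (Finset.card_eq_sum_card_fiberwise hg).symm
        have heq : ∑ j ∈ R, (1:ℕ) = ∑ j ∈ R, (P.filter (fun i => g i = j)).card := by
          rw [hsum, hP]
          simp only [Finset.sum_const, smul_eq_mul, mul_one]
          rw [hR]
        intro j hj
        exact ((Finset.sum_eq_sum_iff_of_le hle).1 heq j hj).symm
      obtain ⟨r, hrR⟩ := Finset.card_pos.1 (by omega : 0 < R.card)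
      obtain ⟨p, hfibr⟩ := Finset.card_eq_one.1 (hone r hrR)
      have hpP : p ∈ P := by
        have : p ∈ P.filter (fun i => g i = r) := hfibr ▸ Finset.mem_singleton_self p
        exact (Finset.mem_filter.1 this).1
      have hgp : g p = r := by
        have : p ∈ P.filter (fun i => g i = r) := hfibr ▸ Finset.mem_singleton_self p
        exact (Finset.mem_filter.1 this).2
      set P' := P.erase p with hP'
      set R' := R.erase r with hR'
      have hPcard' : P'.card = m := by rw [hP', Finset.card_erase_of_mem hpP, hP]; omega
      have hRcard' : R'.card = m := by rw [hR', Finset.card_erase_of_mem hrR, hR]; omega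
      have hg' : ∀ i ∈ P', g i ∈ R' := by
        intro i hi
        refine Finset.mem_erase.2 ⟨?_, hg i (Finset.mem_of_mem_erase hi)⟩
        intro hgi
        have : i ∈ P.filter (fun i => g i = r) :=
          Finset.mem_filter.2 ⟨Finset.mem_of_mem_erase hi, hgi⟩
        rw [hfibr] at this
        exact Finset.ne_of_mem_erase hi (Finset.mem_singleton.1 this)
      have hfib' : ∀ j ∈ R', (P'.filter (fun i => g i = j)).card ≤ k + 1 := by
        intro j hj
        calc (P'.filter (fun i => g i = j)).card
            ≤ (P.filter (fun i => g i = j)).card :=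
              Finset.card_le_card (Finset.filter_subset_filter _ (Finset.erase_subset _ _))
          _ ≤ k + 1 := hfib j (Finset.mem_of_mem_erase hj)
      obtain ⟨T', hT'1, hT'2, hT'3⟩ := IH P' R' g hPcard' hRcard' hg' hfib'
      obtain ⟨q, hqinj, hqmem⟩ := exists_inj_fin k P' (by omega)
      obtain ⟨jv, hjinj, hjmem⟩ := sdr
        (fun t => (R'.filter (fun j => q t ∈ T' j)).erase (g (q t))) (by
          intro t
          have h1 : (R'.filter (fun j => q t ∈ T' j)).card = k + 1 := hT'3 _ (hqmem t)
          have hgmem : g (q t) ∈ R'.filter (fun j => q t ∈ T' j) :=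
            Finset.mem_filter.2 ⟨hg' _ (hqmem t), hT'2 _ (hqmem t)⟩
          rw [Finset.card_erase_of_mem hgmem, h1]
          omega)
      have hjR : ∀ t, jv t ∈ R' := fun t =>
        (Finset.mem_filter.1 (Finset.mem_of_mem_erase (hjmem t))).1
      have hjT : ∀ t, q t ∈ T' (jv t) := fun t =>
        (Finset.mem_filter.1 (Finset.mem_of_mem_erase (hjmem t))).2
      have hgq : ∀ t, g (q t) ≠ jv t := fun t h =>
        Finset.ne_of_mem_erase (hjmem t) h.symm
      obtain ⟨T, hT1, hT2, hT3⟩ := reconstruct g P' R' T' p r q jv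
        (Finset.notMem_erase p P) (Finset.notMem_erase r R) hg'
        (fun j hj => (hT'1 j hj).1) (fun j hj => (hT'1 j hj).2) hT'2 hT'3
        hqinj hjinj hqmem hjR hjT hgq (Or.inl hgp)
      have hPeq : insert p P' = P := by rw [hP']; exact Finset.insert_erase hpP
      have hReq : insert r R' = R := by rw [hR']; exact Finset.insert_erase hrR
      rw [← hPeq, ← hReq]
      exact ⟨T, hT1, hT2, hT3⟩

/-- Splitting a multiset along a decomposition of its image. -/
lemma map_split {ι α : Type*} [DecidableEq ι] [DecidableEq α] (v : ι → α) :
    ∀ (X : Multiset α), ∀ (Y : Multiset α) (M : Multiset ι), Multiset.map v M = X + Y →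
      ∃ Mx My, M = Mx + My ∧ Multiset.map v Mx = X ∧ Multiset.map v My = Y := by
  intro X
  induction X using Multiset.induction with
  | empty =>
    intro Y M h
    exact ⟨0, M, by simp, by simp, by simpa using h⟩
  | cons a X' ih =>
    intro Y M h
    have ha : a ∈ Multiset.map v M := by
      rw [h, Multiset.cons_add]
      exact Multiset.mem_cons_self a _
    obtain ⟨i, hiM, hvi⟩ := Multiset.mem_map.1 ha
    have hM : M = i ::ₘ M.erase i := (Multiset.cons_erase hiM).symm
    have h2 : Multiset.map v (M.erase i) = X' + Y := by
      have heq : Multiset.map v M = a ::ₘ Multiset.map v (M.erase i) := by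
        conv_lhs => rw [hM]
        rw [Multiset.map_cons, hvi]
      rw [heq] at h
      rw [Multiset.cons_add] at h
      exact (Multiset.cons_inj_right a).1 h
    obtain ⟨Mx, My, hMeq, hmx, hmy⟩ := ih Y (M.erase i) h2
    refine ⟨i ::ₘ Mx, My, ?_, ?_, hmy⟩
    · rw [hM, hMeq, Multiset.cons_add]
    · rw [Multiset.map_cons, hvi, hmx]

/-- Lift a partition of a mapped multiset to a partition at the index level. -/
lemma lift_sum {ι α κ : Type*} [DecidableEq ι] [DecidableEq α] [DecidableEq κ] (v : ι → α) :
    ∀ (s : Finset κ) (S : κ → Multiset α) (M : Multiset ι),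
      (∑ j ∈ s, S j) = Multiset.map v M →
      ∃ F : κ → Multiset ι, (∀ j ∈ s, Multiset.map v (F j) = S j) ∧ ∑ j ∈ s, F j = M := by
  intro s
  induction s using Finset.induction with
  | empty =>
    intro S M h
    refine ⟨fun _ => 0, by simp, ?_⟩
    simp only [Finset.sum_empty]
    have : Multiset.map v M = 0 := by rw [← h]; simp
    exact (Multiset.map_eq_zero.1 this).symm
  | insert a s' hna ih =>
    intro S M h
    rw [Finset.sum_insert hna] at h
    obtain ⟨Mx, My, hMeq, hmx, hmy⟩ := map_split v (S a) (∑ j ∈ s', S j) M h.symm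
    obtain ⟨F', hF'1, hF'2⟩ := ih S My hmy.symm
    refine ⟨Function.update F' a Mx, ?_, ?_⟩
    · intro j hj
      rcases Finset.mem_insert.1 hj with rfl | hj'
      · rw [Function.update_self, hmx]
      · rw [Function.update_of_ne (by rintro rfl; exact hna hj') _ _, hF'1 j hj']
    · rw [Finset.sum_insert hna, Function.update_self]
      have : ∑ j ∈ s', Function.update F' a Mx j = ∑ j ∈ s', F' j :=
        Finset.sum_congr rfl (fun j hj => Function.update_of_ne (by rintro rfl; exact hna hj) _ _)
      rw [this, hF'2, hMeq]

lemma card_range_filter (n : ℕ) (p : ℕ → Prop) [DecidablePred p] :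
    ((Finset.range n).filter p).card = (Finset.univ.filter (fun i : Fin n => p i)).card := by
  rw [← Nat.Iio_eq_range, ← Fin.map_valEmbedding_univ, Finset.filter_map, Finset.card_map]
  rfl

/-- **Lemma 1**: in the reduction setting with `n` papers, where paper `i` has `ℓ` weight
entries — one of value `w i` and `ℓ - 1` zeros — any partition of the multiset of all `n·ℓ`
weight values into `n` multisets of cardinality `ℓ` can be realized as a valid assignment of
the weight entries to `n` reviewers: each reviewer `j` gets exactly `ℓ` entries, no two from
the same paper, and the multiset of values of reviewer `j`'s entries is `S j`. -/
theorem ell_partition_realizable_as_valid_assignment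
    (ℓ n : ℕ) (hℓ : 2 < ℓ) (hℓn : ℓ ≤ n)
    (w : Fin n → ℝ) (hw : ∀ i, 0 ≤ w i)
    (S : Fin n → Multiset ℝ)
    (hScard : ∀ j, (S j).card = ℓ)
    (hSpart : ∑ j : Fin n, S j
      = Multiset.map (fun e : Fin n × Fin ℓ => if (e.2 : ℕ) = 0 then w e.1 else 0)
          (Finset.univ : Finset (Fin n × Fin ℓ)).val) :
    ∃ f : Fin n × Fin ℓ → Fin n,
      (∀ j : Fin n,
        (Finset.univ.filter (fun e : Fin n × Fin ℓ => f e = j)).card = ℓ) ∧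
      (∀ (i : Fin n) (s s' : Fin ℓ), f (i, s) = f (i, s') → s = s') ∧
      (∀ j : Fin n,
        Multiset.map (fun e : Fin n × Fin ℓ => if (e.2 : ℕ) = 0 then w e.1 else 0)
            ((Finset.univ.filter (fun e : Fin n × Fin ℓ => f e = j)).val)
          = S j) := by
  classical
  have hℓ0 : 0 < ℓ := by omega
  have hn0 : 0 < n := by omega
  set v : Fin n × Fin ℓ → ℝ := fun e => if (e.2 : ℕ) = 0 then w e.1 else 0 with hv
  -- Step 1: lift the partition to the index level
  obtain ⟨F, hF1, hF2⟩ := lift_sum v Finset.univ S (Finset.univ : Finset (Fin n × Fin ℓ)).val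
    hSpart
  -- each entry belongs to exactly one F j
  have hcount : ∀ e : Fin n × Fin ℓ, ∑ j : Fin n, (F j).count e = 1 := by
    intro e
    rw [← Multiset.count_sum', hF2]
    exact Multiset.count_eq_one_of_mem Finset.univ.nodup (Finset.mem_univ e)
  have huniq : ∀ e : Fin n × Fin ℓ, ∃ j, e ∈ F j ∧ ∀ j', e ∈ F j' → j' = j := by
    intro e
    obtain ⟨j, -, hj⟩ := Finset.exists_ne_zero_of_sum_ne_zero
      (by rw [hcount e]; omega : ∑ j : Fin n, (F j).count e ≠ 0)
    refine ⟨j, Multiset.count_pos.1 (by omega), ?_⟩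
    intro j' hj'
    by_contra hne
    have h1 : (F j).count e + (F j').count e ≤ ∑ j : Fin n, (F j).count e := by
      rw [← Finset.sum_erase_add _ _ (Finset.mem_univ j)]
      have h2 : (F j').count e ≤ ∑ k ∈ Finset.univ.erase j, (F k).count e :=
        Finset.single_le_sum (f := fun k => (F k).count e) (fun k _ => Nat.zero_le _)
          (Finset.mem_erase.2 ⟨fun hc => hne hc, Finset.mem_univ j'⟩)
      omega
    rw [hcount e] at h1
    have h3 : 0 < (F j').count e := Multiset.count_pos.2 hj'
    omega
  choose f₀ hf₀mem hf₀uniq using huniq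
  have hmemF : ∀ (e : Fin n × Fin ℓ) (j : Fin n), e ∈ F j ↔ f₀ e = j := by
    intro e j
    constructor
    · intro h; exact (hf₀uniq e j h).symm ▸ rfl
    · intro h; exact h ▸ hf₀mem e
  have hcardF : ∀ j, Multiset.card (F j) = ℓ := by
    intro j
    have := congrArg Multiset.card (hF1 j (Finset.mem_univ j))
    rw [Multiset.card_map, hScard j] at this
    exact this
  have hnodupF : ∀ j, (F j).Nodup := by
    intro j
    rw [Multiset.nodup_iff_count_le_one]
    intro e
    have h1 : (F j).count e ≤ ∑ k : Fin n, (F k).count e :=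
      Finset.single_le_sum (f := fun k => (F k).count e) (fun k _ => Nat.zero_le _)
        (Finset.mem_univ j)
    rw [hcount e] at h1
    exact h1
  -- the slot-0 assignment
  set g : Fin n → Fin n := fun i => f₀ (i, (⟨0, hℓ0⟩ : Fin ℓ)) with hgdef
  have hgF : ∀ (i : Fin n) (j : Fin n), g i = j ↔ (i, (⟨0, hℓ0⟩ : Fin ℓ)) ∈ F j := by
    intro i j
    rw [hmemF]
  -- fibers of g are small
  have hfibg : ∀ j : Fin n, (Finset.univ.filter (fun i : Fin n => g i = j)).card ≤ ℓ := by
    intro j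
    have hinj : Set.InjOn (fun i : Fin n => ((i, (⟨0, hℓ0⟩ : Fin ℓ)) : Fin n × Fin ℓ))
        (Finset.univ.filter (fun i : Fin n => g i = j)) := by
      intro a _ b _ hab
      exact (Prod.mk.injEq _ _ _ _ ▸ hab).1
    calc (Finset.univ.filter (fun i : Fin n => g i = j)).card
        ≤ (F j).toFinset.card := by
          apply Finset.card_le_card_of_injOn _ _ hinj
          intro i hi
          rw [Finset.mem_coe] at hi
          rw [Finset.mem_coe, Multiset.mem_toFinset]
          exact (hgF i j).1 (Finset.mem_filter.1 hi).2
      _ ≤ Multiset.card (F j) := Multiset.toFinset_card_le _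
      _ = ℓ := hcardF j
  -- Step 2: apply the core combinatorial lemma over ℕ
  set g' : ℕ → ℕ := fun m => if h : m < n then (g ⟨m, h⟩ : ℕ) else 0 with hg'def
  have hg'lt : ∀ i : Fin n, g' (i : ℕ) = (g i : ℕ) := by
    intro i
    simp only [hg'def, i.isLt, dif_pos, Fin.eta]
  obtain ⟨T, hT1, hT2, hT3⟩ := core ℓ (by omega) n hℓn (Finset.range n) (Finset.range n) g'
    (Finset.card_range n) (Finset.card_range n)
    (by
      intro i hi
      rw [Finset.mem_range] at hi
      rw [Finset.mem_range]
      simp only [hg'def, hi, dif_pos]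
      exact (g ⟨i, hi⟩).isLt)
    (by
      intro j hj
      rw [card_range_filter]
      rw [Finset.mem_range] at hj
      have hseteq : (Finset.univ.filter (fun i : Fin n => g' (i : ℕ) = j))
          = (Finset.univ.filter (fun i : Fin n => g i = (⟨j, hj⟩ : Fin n))) := by
        apply Finset.filter_congr
        intro i _
        rw [hg'lt i]
        constructor
        · intro h; exact Fin.ext h
        · intro h; exact congrArg Fin.val h
      rw [hseteq]
      exact hfibg _)
  -- reviewer sets per paper
  set Rev : Fin n → Finset (Fin n) := fun i => Finset.univ.filter (fun j : Fin n => (i : ℕ) ∈ T (j : ℕ)) with hRev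
  have hRevmem : ∀ i j, j ∈ Rev i ↔ (i : ℕ) ∈ T (j : ℕ) := by
    intro i j
    simp [hRev]
  have hRevcard : ∀ i, (Rev i).card = ℓ := by
    intro i
    have h1 := hT3 (i : ℕ) (Finset.mem_range.2 i.isLt)
    rw [card_range_filter] at h1
    simp only [hRev]
    exact h1
  have hgRev : ∀ i, g i ∈ Rev i := by
    intro i
    rw [hRevmem]
    have := hT2 (i : ℕ) (Finset.mem_range.2 i.isLt)
    rw [hg'lt i] at this
    exact this
  set RevE : Fin n → Finset (Fin n) := fun i => (Rev i).erase (g i) with hRevE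
  have hRevEcard : ∀ i, (RevE i).card = ℓ - 1 := by
    intro i
    rw [hRevE]
    simp only
    rw [Finset.card_erase_of_mem (hgRev i), hRevcard i]
  -- define the assignment
  set f : Fin n × Fin ℓ → Fin n := fun e =>
    if h0 : (e.2 : ℕ) = 0 then g e.1
    else ((RevE e.1).orderIsoOfFin (hRevEcard e.1)
      (⟨(e.2 : ℕ) - 1, by have := e.2.isLt; omega⟩ : Fin (ℓ - 1)) : Fin n) with hf
  have hf0 : ∀ i : Fin n, ∀ s : Fin ℓ, (s : ℕ) = 0 → f (i, s) = g i := by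
    intro i s hs
    simp only [hf, hs, dif_pos]
  have hfps : ∀ i : Fin n, ∀ s : Fin ℓ, (s : ℕ) ≠ 0 → f (i, s) ∈ RevE i := by
    intro i s hs
    simp only [hf, hs, dif_neg, not_false_iff]
    exact ((RevE i).orderIsoOfFin (hRevEcard i) _).2
  have hfmem : ∀ i : Fin n, ∀ s : Fin ℓ, f (i, s) ∈ Rev i := by
    intro i s
    by_cases hs : (s : ℕ) = 0
    · rw [hf0 i s hs]; exact hgRev i
    · exact Finset.mem_of_mem_erase (hfps i s hs)
  -- injectivity in the slot argument
  have hinj : ∀ (i : Fin n) (s s' : Fin ℓ), f (i, s) = f (i, s') → s = s' := by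
    intro i s s' hss
    by_cases hs : (s : ℕ) = 0 <;> by_cases hs' : (s' : ℕ) = 0
    · exact Fin.ext (hs.trans hs'.symm)
    · exfalso
      rw [hf0 i s hs] at hss
      exact Finset.ne_of_mem_erase (hfps i s' hs') hss.symm
    · exfalso
      rw [hf0 i s' hs'] at hss
      exact Finset.ne_of_mem_erase (hfps i s hs) hss
    · have h1 : f (i, s) = ((RevE i).orderIsoOfFin (hRevEcard i)
          (⟨(s : ℕ) - 1, by have := s.isLt; omega⟩ : Fin (ℓ - 1)) : Fin n) := by
        simp only [hf, hs, dif_neg, not_false_iff]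
      have h2 : f (i, s') = ((RevE i).orderIsoOfFin (hRevEcard i)
          (⟨(s' : ℕ) - 1, by have := s'.isLt; omega⟩ : Fin (ℓ - 1)) : Fin n) := by
        simp only [hf, hs', dif_neg, not_false_iff]
      rw [h1, h2] at hss
      have h3 := ((RevE i).orderIsoOfFin (hRevEcard i)).injective (Subtype.ext hss)
      have h4 : (s : ℕ) - 1 = (s' : ℕ) - 1 := congrArg Fin.val h3
      exact Fin.ext (by omega)
  -- image of slots is exactly Rev i
  have himg : ∀ i : Fin n, Finset.univ.image (fun s : Fin ℓ => f (i, s)) = Rev i := by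
    intro i
    apply Finset.eq_of_subset_of_card_le
    · intro j hj
      obtain ⟨s, -, rfl⟩ := Finset.mem_image.1 hj
      exact hfmem i s
    · rw [hRevcard i, Finset.card_image_of_injective _ (fun s s' h => hinj i s s' h)]
      simp
  -- fiber cardinalities in the slot direction
  have hslot : ∀ (i : Fin n) (j : Fin n),
      (Finset.univ.filter (fun s : Fin ℓ => f (i, s) = j)).card
        = if j ∈ Rev i then 1 else 0 := by
    intro i j
    by_cases hjR : j ∈ Rev i
    · rw [if_pos hjR]
      rw [← himg i] at hjR
      obtain ⟨s, -, hs⟩ := Finset.mem_image.1 hjR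
      rw [Finset.card_eq_one]
      refine ⟨s, ?_⟩
      ext s'
      simp only [Finset.mem_filter, Finset.mem_univ, true_and, Finset.mem_singleton]
      constructor
      · intro h; exact hinj i s' s (h.trans hs.symm)
      · rintro rfl; exact hs
    · rw [if_neg hjR, Finset.card_eq_zero]
      rw [Finset.eq_empty_iff_forall_notMem]
      intro s hs
      rw [Finset.mem_filter] at hs
      exact hjR (hs.2 ▸ hfmem i s)
  -- fiber of f over j as a finset
  have hfibcard : ∀ j : Fin n,
      (Finset.univ.filter (fun e : Fin n × Fin ℓ => f e = j)).card = ℓ := by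
    intro j
    rw [Finset.card_eq_sum_card_fiberwise
      (f := fun e : Fin n × Fin ℓ => e.1) (t := Finset.univ) (fun e _ => Finset.mem_univ _)]
    have hterm : ∀ i : Fin n,
        ((Finset.univ.filter (fun e : Fin n × Fin ℓ => f e = j)).filter
          (fun e => e.1 = i)).card = if j ∈ Rev i then 1 else 0 := by
      intro i
      rw [← hslot i j]
      have hset : (Finset.univ.filter (fun e : Fin n × Fin ℓ => f e = j)).filter
            (fun e => e.1 = i)
          = (Finset.univ.filter (fun s : Fin ℓ => f (i, s) = j)).image (fun s => (i, s)) := by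
        ext e
        simp only [Finset.mem_filter, Finset.mem_univ, true_and, Finset.mem_image]
        constructor
        · rintro ⟨h1, h2⟩
          refine ⟨e.2, ?_, ?_⟩
          · rw [← h2, Prod.mk.eta]; exact h1
          · rw [← h2, Prod.mk.eta]
        · rintro ⟨s, hs1, rfl⟩
          exact ⟨hs1, rfl⟩
      rw [hset, Finset.card_image_of_injective _ (fun a b hab => (Prod.ext_iff.1 hab).2)]
    rw [Finset.sum_congr rfl (fun i _ => hterm i), ← Finset.card_filter]
    have hset2 : (Finset.univ.filter (fun i : Fin n => j ∈ Rev i))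
        = (Finset.univ.filter (fun i : Fin n => (i : ℕ) ∈ T ((j : ℕ)))) := by
      apply Finset.filter_congr
      intro i _
      rw [hRevmem]
    rw [hset2]
    have h5 := card_range_filter n (fun m => m ∈ T ((j : ℕ)))
    rw [Finset.filter_mem_eq_inter,
      Finset.inter_eq_right.2 (hT1 (j : ℕ) (Finset.mem_range.2 j.isLt)).1] at h5
    rw [← h5]
    exact (hT1 (j : ℕ) (Finset.mem_range.2 j.isLt)).2
  -- value multisets
  refine ⟨f, hfibcard, hinj, ?_⟩
  intro j
  set X : Multiset (Fin n × Fin ℓ) := (Finset.univ.filter (fun e : Fin n × Fin ℓ => f e = j)).val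
    with hX
  have hXnodup : X.Nodup := (Finset.univ.filter (fun e : Fin n × Fin ℓ => f e = j)).nodup
  have hXmem : ∀ e, e ∈ X ↔ f e = j := by
    intro e
    rw [hX, ← Finset.mem_def]
    simp [Finset.mem_filter]
  have hXcard : Multiset.card X = ℓ := hfibcard j
  have claim1 : X.filter (fun e => (e.2 : ℕ) = 0) = (F j).filter (fun e => (e.2 : ℕ) = 0) := by
    rw [Multiset.Nodup.ext (Multiset.Nodup.filter _ hXnodup)
      (Multiset.Nodup.filter _ (hnodupF j))]
    intro e
    rw [Multiset.mem_filter, Multiset.mem_filter, hXmem]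
    constructor
    · rintro ⟨h1, h2⟩
      refine ⟨?_, h2⟩
      have he2 : e.2 = (⟨0, hℓ0⟩ : Fin ℓ) := Fin.ext h2
      have h3 : f (e.1, e.2) = g e.1 := hf0 e.1 e.2 h2
      rw [Prod.mk.eta] at h3
      have hgj : g e.1 = j := by rw [← h3, h1]
      have h4 := (hgF e.1 j).1 hgj
      rwa [← he2, Prod.mk.eta] at h4
    · rintro ⟨h1, h2⟩
      refine ⟨?_, h2⟩
      have he2 : e.2 = (⟨0, hℓ0⟩ : Fin ℓ) := Fin.ext h2
      have h4 : (e.1, (⟨0, hℓ0⟩ : Fin ℓ)) ∈ F j := by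
        rwa [← he2, Prod.mk.eta]
      have hgj : g e.1 = j := (hgF e.1 j).2 h4
      have h3 : f (e.1, e.2) = g e.1 := hf0 e.1 e.2 h2
      rw [Prod.mk.eta] at h3
      rw [h3, hgj]
  have hc2 : Multiset.card (X.filter (fun e => ¬ (e.2 : ℕ) = 0))
      = Multiset.card ((F j).filter (fun e => ¬ (e.2 : ℕ) = 0)) := by
    have hX2 := congrArg Multiset.card (Multiset.filter_add_not (fun e => (e.2 : ℕ) = 0) X)
    have hY2 := congrArg Multiset.card (Multiset.filter_add_not (fun e => (e.2 : ℕ) = 0) (F j))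
    rw [Multiset.card_add] at hX2 hY2
    rw [hXcard] at hX2
    rw [hcardF j] at hY2
    rw [claim1] at hX2
    omega
  have hzeroX : Multiset.map v (X.filter (fun e => ¬ (e.2 : ℕ) = 0))
      = Multiset.replicate (Multiset.card (X.filter (fun e => ¬ (e.2 : ℕ) = 0))) (0 : ℝ) := by
    have hcongr : Multiset.map v (X.filter (fun e => ¬ (e.2 : ℕ) = 0))
        = Multiset.map (fun _ => (0:ℝ)) (X.filter (fun e => ¬ (e.2 : ℕ) = 0)) := by
      apply Multiset.map_congr rfl
      intro e he
      have hne : ¬ (e.2 : ℕ) = 0 := (Multiset.mem_filter.1 he).2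
      simp only [hv]
      exact if_neg hne
    rw [hcongr]
    exact Multiset.map_const' _ _
  have hzeroF : Multiset.map v ((F j).filter (fun e => ¬ (e.2 : ℕ) = 0))
      = Multiset.replicate (Multiset.card ((F j).filter (fun e => ¬ (e.2 : ℕ) = 0))) (0 : ℝ) := by
    have hcongr : Multiset.map v ((F j).filter (fun e => ¬ (e.2 : ℕ) = 0))
        = Multiset.map (fun _ => (0:ℝ)) ((F j).filter (fun e => ¬ (e.2 : ℕ) = 0)) := by
      apply Multiset.map_congr rfl
      intro e he
      have hne : ¬ (e.2 : ℕ) = 0 := (Multiset.mem_filter.1 he).2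
      simp only [hv]
      exact if_neg hne
    rw [hcongr]
    exact Multiset.map_const' _ _
  calc Multiset.map v X
      = Multiset.map v (X.filter (fun e => (e.2 : ℕ) = 0))
        + Multiset.map v (X.filter (fun e => ¬ (e.2 : ℕ) = 0)) := by
        rw [← Multiset.map_add, Multiset.filter_add_not]
    _ = Multiset.map v ((F j).filter (fun e => (e.2 : ℕ) = 0))
        + Multiset.map v ((F j).filter (fun e => ¬ (e.2 : ℕ) = 0)) := by
        rw [claim1, hzeroX, hzeroF, hc2]
    _ = Multiset.map v (F j) := by rw [← Multiset.map_add, Multiset.filter_add_not]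
    _ = S j := hF1 j (Finset.mem_univ j)
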